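/- There exists a unique formal power series A(x) = x + a_2 x^2 + a_3 x^3 + ... with a_1 = 1 (i.e., A(x) ≡ x mod x^2) such that A(A(x)) = (A(x) - x)/x. -/

import Mathlib

/-- Composition `f ∘ g` (i.e. `f(g(x))`) of formal power series, valid when `g`
has zero constant term. -/
noncomputable def psComp {R : Type*} [CommSemiring R] (f g : PowerSeries R) : PowerSeries R :=
  PowerSeries.mk fun n =>
    ∑ k ∈ Finset.range (n + 1), PowerSeries.coeff k f * PowerSeries.coeff n (g ^ k)

lemma coeff_pow_congr {B C : PowerSeries ℚ} {n : ℕ}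
    (h : ∀ j ≤ n, PowerSeries.coeff j B = PowerSeries.coeff j C) :
    ∀ k, ∀ m ≤ n, PowerSeries.coeff m (B ^ k) = PowerSeries.coeff m (C ^ k) := by
  intro k
  induction k with
  | zero => intro m hm; simp
  | succ k ih =>
    intro m hm
    rw [pow_succ, pow_succ, PowerSeries.coeff_mul, PowerSeries.coeff_mul]
    refine Finset.sum_congr rfl fun p hp => ?_
    replace hp : p.1 + p.2 = m := by simpa using hp
    rw [ih p.1 (le_trans (by omega) hm), h p.2 (le_trans (by omega) hm)]

/-- The coefficient sequence of the unique solution. -/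
noncomputable def aSeq : ℕ → ℚ
  | 0 => 0
  | 1 => 1
  | (n+2) => ∑ k ∈ (Finset.range (n+2)).attach,
      aSeq k.1 * PowerSeries.coeff (n+1)
        ((PowerSeries.mk fun j => if h : j < n + 2 then aSeq j else 0) ^ k.1)
  termination_by n => n
  decreasing_by
  · exact Finset.mem_range.mp k.2
  · exact h

lemma coeff_psComp {f g : PowerSeries ℚ} (n : ℕ) :
    PowerSeries.coeff n (psComp f g)
      = ∑ k ∈ Finset.range (n + 1),
          PowerSeries.coeff k f * PowerSeries.coeff n (g ^ k) := by
  simp [psComp]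

/-- The recursion that any solution satisfies. -/
lemma sol_rec {B : PowerSeries ℚ}
    (hEq : PowerSeries.X * psComp B B = B - PowerSeries.X) (m : ℕ) :
    PowerSeries.coeff (m + 2) B
      = ∑ k ∈ Finset.range (m + 2),
          PowerSeries.coeff k B * PowerSeries.coeff (m + 1) (B ^ k) := by
  have h := congrArg (PowerSeries.coeff (m + 2)) hEq
  rw [PowerSeries.coeff_succ_X_mul, map_sub, PowerSeries.coeff_X, if_neg (by omega),
    coeff_psComp, sub_zero] at h
  exact h.symm

noncomputable def Asol : PowerSeries ℚ := PowerSeries.mk aSeq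

lemma Asol_rec (m : ℕ) :
    PowerSeries.coeff (m + 2) Asol
      = ∑ k ∈ Finset.range (m + 2),
          PowerSeries.coeff k Asol * PowerSeries.coeff (m + 1) (Asol ^ k) := by
  have hagree : ∀ j ≤ m + 1,
      PowerSeries.coeff j (PowerSeries.mk fun j => if h : j < m + 2 then aSeq j else 0)
        = PowerSeries.coeff j Asol := by
    intro j hj
    simp only [Asol, PowerSeries.coeff_mk]
    rw [dif_pos (by omega : j < m + 2)]
  have : PowerSeries.coeff (m + 2) Asol = aSeq (m + 2) := by
    simp [Asol, PowerSeries.coeff_mk]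
  rw [this, aSeq]
  rw [← Finset.sum_attach (Finset.range (m + 2))]
  refine Finset.sum_congr rfl fun k _ => ?_
  rw [coeff_pow_congr hagree k.1 (m + 1) le_rfl]
  simp [Asol, PowerSeries.coeff_mk]

lemma sol_unique {B C : PowerSeries ℚ}
    (hB0 : PowerSeries.constantCoeff B = 0) (hB1 : PowerSeries.coeff 1 B = 1)
    (hBrec : ∀ m, PowerSeries.coeff (m + 2) B
      = ∑ k ∈ Finset.range (m + 2),
          PowerSeries.coeff k B * PowerSeries.coeff (m + 1) (B ^ k))
    (hC0 : PowerSeries.constantCoeff C = 0) (hC1 : PowerSeries.coeff 1 C = 1)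
    (hCrec : ∀ m, PowerSeries.coeff (m + 2) C
      = ∑ k ∈ Finset.range (m + 2),
          PowerSeries.coeff k C * PowerSeries.coeff (m + 1) (C ^ k)) :
    B = C := by
  ext n
  induction n using Nat.strong_induction_on with
  | _ n ih =>
    match n with
    | 0 => rw [PowerSeries.coeff_zero_eq_constantCoeff, hB0, hC0]
    | 1 => rw [hB1, hC1]
    | (m+2) =>
      have hlow : ∀ j ≤ m + 1, PowerSeries.coeff j B = PowerSeries.coeff j C :=
        fun j hj => ih j (by omega)
      rw [hBrec m, hCrec m]
      refine Finset.sum_congr rfl fun k hk => ?_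
      rw [Finset.mem_range] at hk
      rw [hlow k (by omega), coeff_pow_congr hlow k (m + 1) le_rfl]

/-- There is a unique formal power series `A(x) = x + a₂x² + ⋯` (i.e. with
`A ≡ x (mod x²)`) satisfying `A(A(x)) = (A(x) - x)/x`, equivalently
`x·A(A(x)) = A(x) - x`. -/
theorem unique_left_shift_eigenseries :
    ∃! A : PowerSeries ℚ,
      (PowerSeries.constantCoeff A = 0 ∧ PowerSeries.coeff 1 A = 1) ∧
        PowerSeries.X * psComp A A = A - PowerSeries.X := by
  have hA0 : PowerSeries.constantCoeff Asol = 0 := by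
    rw [← PowerSeries.coeff_zero_eq_constantCoeff]
    simp [Asol, PowerSeries.coeff_mk, aSeq]
  have hA1 : PowerSeries.coeff 1 Asol = 1 := by
    simp [Asol, PowerSeries.coeff_mk, aSeq]
  have hAEq : PowerSeries.X * psComp Asol Asol = Asol - PowerSeries.X := by
    ext n
    match n with
    | 0 =>
      rw [map_sub]
      simp [hA0, PowerSeries.coeff_zero_eq_constantCoeff, map_mul]
    | 1 =>
      rw [PowerSeries.coeff_succ_X_mul, map_sub, PowerSeries.coeff_X, if_pos rfl,
        coeff_psComp, hA1]
      simp [← PowerSeries.coeff_zero_eq_constantCoeff] at hA0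
      simp [hA0]
    | (m+2) =>
      rw [PowerSeries.coeff_succ_X_mul, map_sub, PowerSeries.coeff_X, if_neg (by omega),
        coeff_psComp, Asol_rec m]
      ring
  refine ⟨Asol, ⟨⟨hA0, hA1⟩, hAEq⟩, ?_⟩
  rintro B ⟨⟨hB0, hB1⟩, hBEq⟩
  exact sol_unique hB0 hB1 (sol_rec hBEq) hA0 hA1 (sol_rec hAEq)
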